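/- Let m = k+1 (k ≥ 1) and let D be any deviation function from k-committees to nonempty deviations of size at most k. Then there exists a probability distribution q over k-committees and a real u ≥ 0 such that: for every vote A ⊆ C, the q-probability of the event |W ∩ A| < |D(W) ∩ A| is at most u, and u − (1/k)·E_{W∼q}[|D(W)|] ≤ −1/(k(k+1)). In particular the dual LP value is at most −1/(k(k+1)) for every D. -/

import Mathlib

open Finset

lemma stmt8_erase_inj {m : ℕ} : Function.Injective (fun j : Fin m => (univ : Finset (Fin m)).erase j) := by
  intro j j' h
  simp only at h
  by_contra hne
  have h2 : j' ∈ (univ : Finset (Fin m)).erase j := by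
    simp [Finset.mem_erase, Ne.symm hne]
  rw [h] at h2
  simp [Finset.mem_erase] at h2

lemma stmt8_event {m : ℕ} (D : Finset (Fin m) → Finset (Fin m)) (j : Fin m) (A : Finset (Fin m))
    (h : (((univ : Finset (Fin m)).erase j) ∩ A).card < (D ((univ : Finset (Fin m)).erase j) ∩ A).card) :
    j ∈ A ∧ A ⊆ D ((univ : Finset (Fin m)).erase j) := by
  have hsub : D (univ.erase j) ∩ A ⊆ A := Finset.inter_subset_right
  have hle : (D (univ.erase j) ∩ A).card ≤ A.card := Finset.card_le_card hsub
  have heq : (univ : Finset (Fin m)).erase j ∩ A = A.erase j := by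
    ext x; simp [Finset.mem_erase, Finset.mem_inter, and_comm]
  rw [heq] at h
  by_cases hjA : j ∈ A
  · refine ⟨hjA, ?_⟩
    have h1 : (A.erase j).card = A.card - 1 := Finset.card_erase_of_mem hjA
    have h2 : A.card ≤ (D (univ.erase j) ∩ A).card := by
      have hA1 : 1 ≤ A.card := Finset.card_pos.mpr ⟨j, hjA⟩
      omega
    have h3 := Finset.eq_of_subset_of_card_le hsub h2
    intro x hx
    rw [← h3] at hx
    exact (Finset.mem_inter.mp hx).1
  · rw [Finset.erase_eq_of_notMem hjA] at h
    omega

lemma stmt8_S {m : ℕ} (D : Finset (Fin m) → Finset (Fin m))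
    (hD2 : ∀ j : Fin m, j ∈ D ((univ : Finset (Fin m)).erase j)) :
    ∃ S : Finset (Fin m),
      (∀ j ∈ S, ∀ j' ∈ S, j ≠ j' →
        ¬(j ∈ D ((univ : Finset (Fin m)).erase j') ∧ j' ∈ D ((univ : Finset (Fin m)).erase j))) ∧
      (∀ c : Fin m, ∃ j ∈ S, c ∈ D ((univ : Finset (Fin m)).erase j)) := by
  suffices h : ∀ n : ℕ, ∀ S : Finset (Fin m),
      (∀ j ∈ S, ∀ j' ∈ S, j ≠ j' →
        ¬(j ∈ D (univ.erase j') ∧ j' ∈ D (univ.erase j))) →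
      ((univ : Finset (Fin m)) \ S.biUnion (fun j => D (univ.erase j))).card ≤ n →
      ∃ S' : Finset (Fin m),
        (∀ j ∈ S', ∀ j' ∈ S', j ≠ j' →
          ¬(j ∈ D (univ.erase j') ∧ j' ∈ D (univ.erase j))) ∧
        (∀ c : Fin m, ∃ j ∈ S', c ∈ D (univ.erase j)) by
    exact h m ∅ (by simp) (le_trans (Finset.card_le_card (Finset.sdiff_subset)) (by simp))
  intro n
  induction n with
  | zero =>
    intro S hpair hcard
    refine ⟨S, hpair, ?_⟩
    intro c
    have hempty : (univ : Finset (Fin m)) \ S.biUnion (fun j => D (univ.erase j)) = ∅ :=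
      Finset.card_eq_zero.mp (Nat.le_zero.mp hcard)
    have hcm : c ∈ S.biUnion (fun j => D (univ.erase j)) := by
      by_contra hc
      have h4 : c ∈ (univ : Finset (Fin m)) \ S.biUnion (fun j => D (univ.erase j)) := by
        simp [Finset.mem_sdiff, hc]
      rw [hempty] at h4; exact absurd h4 (Finset.notMem_empty c)
    simpa using Finset.mem_biUnion.mp hcm
  | succ n ih =>
    intro S hpair hcard
    by_cases hemp : ((univ : Finset (Fin m)) \ S.biUnion (fun j => D (univ.erase j))) = ∅
    · exact ih S hpair (by rw [hemp]; simp)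
    · obtain ⟨c, hc⟩ := Finset.nonempty_iff_ne_empty.mpr hemp
      have hcU : c ∉ S.biUnion (fun j => D (univ.erase j)) := (Finset.mem_sdiff.mp hc).2
      have hcnot : ∀ j ∈ S, c ∉ D (univ.erase j) := by
        intro j hj hmem
        exact hcU (Finset.mem_biUnion.mpr ⟨j, hj, hmem⟩)
      have hpair' : ∀ j ∈ insert c S, ∀ j' ∈ insert c S, j ≠ j' →
          ¬(j ∈ D (univ.erase j') ∧ j' ∈ D (univ.erase j)) := by
        intro j hj j' hj' hne hcontra
        rcases Finset.mem_insert.mp hj with rfl | hjS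
        · rcases Finset.mem_insert.mp hj' with rfl | hj'S
          · exact hne rfl
          · exact hcnot j' hj'S hcontra.1
        · rcases Finset.mem_insert.mp hj' with rfl | hj'S
          · exact hcnot j hjS hcontra.2
          · exact hpair j hjS j' hj'S hne hcontra
      apply ih (insert c S) hpair'
      have hsub : ((univ : Finset (Fin m)) \ (insert c S).biUnion (fun j => D (univ.erase j))) ⊆
          (((univ : Finset (Fin m)) \ S.biUnion (fun j => D (univ.erase j))).erase c) := by
        intro x hx
        rw [Finset.mem_sdiff] at hx
        rw [Finset.mem_erase, Finset.mem_sdiff]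
        have hxc : x ≠ c := fun heq =>
          hx.2 (Finset.mem_biUnion.mpr ⟨c, Finset.mem_insert_self c S, by rw [heq]; exact hD2 c⟩)
        refine ⟨hxc, hx.1, fun hxU => hx.2 ?_⟩
        obtain ⟨j, hj, hxj⟩ := Finset.mem_biUnion.mp hxU
        exact Finset.mem_biUnion.mpr ⟨j, Finset.mem_insert_of_mem hj, hxj⟩
      calc ((univ : Finset (Fin m)) \ (insert c S).biUnion (fun j => D (univ.erase j))).card
          ≤ (((univ : Finset (Fin m)) \ S.biUnion (fun j => D (univ.erase j))).erase c).card :=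
            Finset.card_le_card hsub
        _ = ((univ : Finset (Fin m)) \ S.biUnion (fun j => D (univ.erase j))).card - 1 :=
            Finset.card_erase_of_mem hc
        _ ≤ n := by omega
/-- for `m = k+1`, for every deviation function `D` there is a
distribution `q` over `k`-committees and `u ≥ 0` with the probability of any
vote preferring its deviation at most `u` and
`u - E[|D(W)|]/k ≤ -1/(k(k+1))`. -/
theorem stmt8 (k : ℕ) (hk : 1 ≤ k) (m : ℕ) (hm : m = k + 1)
    (D : Finset (Fin m) → Finset (Fin m))
    (hD : ∀ Wc : Finset (Fin m), Wc.card = k → (D Wc).Nonempty ∧ (D Wc).card ≤ k) :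
    ∃ (q : Finset (Fin m) → ℚ) (u : ℚ),
      (∀ Wc, 0 ≤ q Wc) ∧ (∀ Wc : Finset (Fin m), Wc.card ≠ k → q Wc = 0) ∧
      (∑ Wc : Finset (Fin m), q Wc = 1) ∧ 0 ≤ u ∧
      (∀ A : Finset (Fin m),
        (∑ Wc ∈ Finset.univ.filter
            (fun Wc : Finset (Fin m) => Wc.card = k ∧ (Wc ∩ A).card < (D Wc ∩ A).card),
          q Wc) ≤ u) ∧
      u - (∑ Wc : Finset (Fin m), q Wc * ((D Wc).card : ℚ)) / (k : ℚ)
        ≤ -(1 / ((k : ℚ) * ((k : ℚ) + 1))) := by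
  have hkq : (1 : ℚ) ≤ (k : ℚ) := by exact_mod_cast hk
  have hkpos : (0 : ℚ) < (k : ℚ) := by linarith
  have hcard_erase : ∀ j : Fin m, ((univ : Finset (Fin m)).erase j).card = k := by
    intro j
    rw [Finset.card_erase_of_mem (Finset.mem_univ j), Finset.card_univ, Fintype.card_fin, hm]
    omega
  by_cases hcase : ∃ j : Fin m, D ((univ : Finset (Fin m)).erase j) ⊆ (univ : Finset (Fin m)).erase j
  · -- Case 1: point mass on W^(j), u = 0
    obtain ⟨j, hj⟩ := hcase
    refine ⟨fun Wc => if Wc = (univ : Finset (Fin m)).erase j then 1 else 0, 0,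
      ?_, ?_, ?_, le_refl 0, ?_, ?_⟩
    · intro Wc
      dsimp only
      split <;> norm_num
    · intro Wc hW
      by_cases hWc : Wc = (univ : Finset (Fin m)).erase j
      · exact absurd (hWc ▸ hcard_erase j) hW
      · simp [hWc]
    · simp
    · intro A
      apply le_of_eq
      apply Finset.sum_eq_zero
      intro Wc hWc
      rw [Finset.mem_filter] at hWc
      by_cases hWe : Wc = (univ : Finset (Fin m)).erase j
      · exfalso
        have hlt := hWc.2.2
        rw [hWe] at hlt
        exact absurd (Finset.card_le_card (Finset.inter_subset_inter hj (le_refl A))) (by omega)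
      · simp [hWe]
    · have hE : (∑ Wc : Finset (Fin m),
          (if Wc = (univ : Finset (Fin m)).erase j then (1:ℚ) else 0) * ((D Wc).card : ℚ))
          = ((D ((univ : Finset (Fin m)).erase j)).card : ℚ) := by
        rw [Finset.sum_eq_single ((univ : Finset (Fin m)).erase j)]
        · simp
        · intro b _ hb; simp [hb]
        · intro h; exact absurd (Finset.mem_univ _) h
      rw [hE]
      have hd1 : (1 : ℚ) ≤ ((D ((univ : Finset (Fin m)).erase j)).card : ℚ) := by
        have := (hD _ (hcard_erase j)).1
        exact_mod_cast Finset.card_pos.mpr this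
      have h2 : 1 / ((k : ℚ) * ((k : ℚ) + 1))
          ≤ ((D ((univ : Finset (Fin m)).erase j)).card : ℚ) / (k : ℚ) := by
        rw [div_le_div_iff₀ (by positivity) hkpos]
        have ha : (k : ℚ) * ((k : ℚ) + 1) ≤ ((D ((univ : Finset (Fin m)).erase j)).card : ℚ) * ((k : ℚ) * ((k : ℚ) + 1)) :=
          le_mul_of_one_le_left (by positivity) hd1
        nlinarith
      linarith
  · -- Case 2: greedy uniform distribution
    push_neg at hcase
    have hD2 : ∀ j : Fin m, j ∈ D ((univ : Finset (Fin m)).erase j) := by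
      intro j
      obtain ⟨x, hxD, hxe⟩ := Finset.not_subset.mp (hcase j)
      have hxj : x = j := by
        by_contra hne
        exact hxe (Finset.mem_erase.mpr ⟨hne, Finset.mem_univ x⟩)
      rwa [hxj] at hxD
    obtain ⟨S, hpair, hcover⟩ := stmt8_S D hD2
    have hmpos : 0 < m := by omega
    have hSne : S.Nonempty := by
      obtain ⟨j, hj, _⟩ := hcover ⟨0, hmpos⟩
      exact ⟨j, hj⟩
    set T := S.card with hT
    have hT1 : 1 ≤ T := Finset.card_pos.mpr hSne
    have hTm : T ≤ k + 1 := by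
      have h := Finset.card_le_univ S
      rw [Fintype.card_fin] at h
      omega
    have hTq : (0 : ℚ) < (T : ℚ) := by exact_mod_cast hT1
    have hTq' : (T : ℚ) ≠ 0 := ne_of_gt hTq
    have himg : (S.image (fun j => (univ : Finset (Fin m)).erase j)).card = T :=
      Finset.card_image_of_injective S stmt8_erase_inj
    refine ⟨fun Wc =>
        if Wc ∈ S.image (fun j => (univ : Finset (Fin m)).erase j) then 1 / (T : ℚ) else 0,
      1 / (T : ℚ), ?_, ?_, ?_, by positivity, ?_, ?_⟩
    · intro Wc
      dsimp only
      split
      · positivity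
      · exact le_refl 0
    · intro Wc hW
      by_cases hWc : Wc ∈ S.image (fun j => (univ : Finset (Fin m)).erase j)
      · exfalso
        obtain ⟨j, _, hje⟩ := Finset.mem_image.mp hWc
        exact hW (hje ▸ hcard_erase j)
      · dsimp only
        rw [if_neg hWc]
    · rw [Finset.sum_ite_mem, Finset.univ_inter, Finset.sum_const, himg, nsmul_eq_mul,
        mul_one_div, div_self hTq']
    · intro A
      rw [Finset.sum_ite_mem]
      have hcard1 : (Finset.univ.filter
          (fun Wc : Finset (Fin m) => Wc.card = k ∧ (Wc ∩ A).card < (D Wc ∩ A).card) ∩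
          S.image (fun j => (univ : Finset (Fin m)).erase j)).card ≤ 1 := by
        rw [Finset.card_le_one]
        intro a ha b hb
        rw [Finset.mem_inter, Finset.mem_filter] at ha hb
        obtain ⟨ja, hja, hae⟩ := Finset.mem_image.mp ha.2
        obtain ⟨jb, hjb, hbe⟩ := Finset.mem_image.mp hb.2
        subst hae hbe
        by_cases hab : ja = jb
        · rw [hab]
        · exfalso
          obtain ⟨haA, haS⟩ := stmt8_event D ja A ha.1.2.2
          obtain ⟨hbA, hbS⟩ := stmt8_event D jb A hb.1.2.2
          exact hpair ja hja jb hjb hab ⟨hbS haA, haS hbA⟩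
      calc (∑ _Wc ∈ Finset.univ.filter
            (fun Wc : Finset (Fin m) => Wc.card = k ∧ (Wc ∩ A).card < (D Wc ∩ A).card) ∩
            S.image (fun j => (univ : Finset (Fin m)).erase j), (1 / (T : ℚ)))
          = ((Finset.univ.filter
            (fun Wc : Finset (Fin m) => Wc.card = k ∧ (Wc ∩ A).card < (D Wc ∩ A).card) ∩
            S.image (fun j => (univ : Finset (Fin m)).erase j)).card : ℚ) * (1 / (T : ℚ)) := by
            rw [Finset.sum_const, nsmul_eq_mul]
        _ ≤ 1 * (1 / (T : ℚ)) := by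
            apply mul_le_mul_of_nonneg_right _ (by positivity)
            exact_mod_cast hcard1
        _ = 1 / (T : ℚ) := one_mul _
    · have hE : (∑ Wc : Finset (Fin m),
          (if Wc ∈ S.image (fun j => (univ : Finset (Fin m)).erase j) then 1 / (T : ℚ) else 0)
            * ((D Wc).card : ℚ))
          = (1 / (T : ℚ)) * ∑ j ∈ S, ((D ((univ : Finset (Fin m)).erase j)).card : ℚ) := by
        simp only [ite_mul, zero_mul]
        rw [Finset.sum_ite_mem, Finset.univ_inter,
          Finset.sum_image (fun x _ y _ h => stmt8_erase_inj h), ← Finset.mul_sum]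
      rw [hE]
      have hsum : ((k : ℚ) + 1) ≤ ∑ j ∈ S, ((D ((univ : Finset (Fin m)).erase j)).card : ℚ) := by
        have hbu : (univ : Finset (Fin m)) ⊆
            S.biUnion (fun j => D ((univ : Finset (Fin m)).erase j)) := by
          intro c _
          obtain ⟨j, hj, hcj⟩ := hcover c
          exact Finset.mem_biUnion.mpr ⟨j, hj, hcj⟩
        have h1 : m ≤ ∑ j ∈ S, ((D ((univ : Finset (Fin m)).erase j)).card) := by
          calc m = (univ : Finset (Fin m)).card := by rw [Finset.card_univ, Fintype.card_fin]
            _ ≤ (S.biUnion (fun j => D ((univ : Finset (Fin m)).erase j))).card :=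
                Finset.card_le_card hbu
            _ ≤ ∑ j ∈ S, ((D ((univ : Finset (Fin m)).erase j)).card) := Finset.card_biUnion_le
        have h2 : ((m : ℚ)) ≤ ∑ j ∈ S, ((D ((univ : Finset (Fin m)).erase j)).card : ℚ) := by
          exact_mod_cast h1
        have hmq : ((m : ℚ)) = (k : ℚ) + 1 := by rw [hm]; push_cast; ring
        linarith
      set E : ℚ := ∑ j ∈ S, ((D ((univ : Finset (Fin m)).erase j)).card : ℚ) with hEdef
      have hTk1 : (T : ℚ) ≤ (k : ℚ) + 1 := by exact_mod_cast hTm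
      have h1 : 1 / (T : ℚ) - (1 / (T : ℚ) * E) / (k : ℚ)
          ≤ 1 / (T : ℚ) - (1 / (T : ℚ) * ((k : ℚ) + 1)) / (k : ℚ) := by
        have hmul : 1 / (T : ℚ) * ((k : ℚ) + 1) ≤ 1 / (T : ℚ) * E :=
          mul_le_mul_of_nonneg_left hsum (by positivity)
        have hdiv : (1 / (T : ℚ) * ((k : ℚ) + 1)) / (k : ℚ) ≤ (1 / (T : ℚ) * E) / (k : ℚ) := by
          apply div_le_div_of_nonneg_right hmul hkpos.le
        linarith
      have h2 : 1 / (T : ℚ) - (1 / (T : ℚ) * ((k : ℚ) + 1)) / (k : ℚ)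
          = -(1 / ((T : ℚ) * (k : ℚ))) := by
        field_simp
        ring
      have h3 : 1 / ((k : ℚ) * ((k : ℚ) + 1)) ≤ 1 / ((T : ℚ) * (k : ℚ)) := by
        apply one_div_le_one_div_of_le (by positivity)
        nlinarith
      linarith
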